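/- For n ≥ 1 and complex numbers i_1, …, i_n, the n×n matrix M over the polynomial ring ℂ[x] with entries M_{r,k} = (x + i_k)^r − x^r (for 1 ≤ r, k ≤ n) has determinant equal to the constant polynomial i_1 i_2 ⋯ i_n · ∏_{1 ≤ k < l ≤ n} (i_l − i_k). In particular, det M does not depend on x. -/
import Mathlib

open Polynomial

open Matrix Finset in
/-- The matrix M over ℂ[x] with entries M_{r,k} = (x + i_k)^r − x^r (1 ≤ r,k ≤ n) has
    determinant i_1 ⋯ i_n · ∏_{k<l} (i_l − i_k), a constant polynomial. -/
theorem stmt_14 (n : ℕ) (hn : 1 ≤ n) (i : Fin n → ℂ)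
    (M : Matrix (Fin n) (Fin n) (Polynomial ℂ))
    (hM : ∀ r c : Fin n,
      M r c = (X + C (i c)) ^ ((r : ℕ) + 1) - X ^ ((r : ℕ) + 1)) :
    M.det = C ((∏ c, i c) *
      ∏ p ∈ Finset.univ.filter (fun p : Fin n × Fin n => p.1 < p.2),
        (i p.2 - i p.1)) := by
  classical
  set A : Matrix (Fin n) (Fin n) (Polynomial ℂ) := fun r s =>
    if (s : ℕ) ≤ (r : ℕ) then
      C ((Nat.choose ((r : ℕ) + 1) ((s : ℕ) + 1) : ℕ) : ℂ) * X ^ ((r : ℕ) - (s : ℕ))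
    else 0 with hA
  set W : Matrix (Fin n) (Fin n) (Polynomial ℂ) := fun s c => C (i c ^ ((s : ℕ) + 1)) with hW
  have hfact : M = A * W := by
    funext r c
    rw [hM, Matrix.mul_apply]
    set a : ℂ := i c
    set rr : ℕ := (r : ℕ)
    have key : ∀ s : Fin n, A r s * W s c =
        (fun s : ℕ => (if s ≤ rr then
          C ((Nat.choose (rr + 1) (s + 1) : ℕ) : ℂ) * X ^ (rr - s) else 0) * C (a ^ (s + 1)))
          (s : ℕ) := fun s => rfl
    rw [Finset.sum_congr rfl (fun s _ => key s),
      Fin.sum_univ_eq_sum_range (fun s : ℕ => (if s ≤ rr then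
        C ((Nat.choose (rr + 1) (s + 1) : ℕ) : ℂ) * X ^ (rr - s) else 0) * C (a ^ (s + 1))) n]
    have hsub : Finset.range (rr + 1) ⊆ Finset.range n := by
      apply Finset.range_subset_range.2
      exact r.2
    rw [← Finset.sum_subset hsub (fun s _ hs => by
      rw [Finset.mem_range, not_lt] at hs
      rw [if_neg (by omega), zero_mul])]
    rw [← Finset.sum_range_reflect]
    have hlhs : (X + C a) ^ (rr + 1) =
        ∑ k ∈ Finset.range (rr + 1), X ^ k * C a ^ (rr + 1 - k) *
          (Nat.choose (rr + 1) k : Polynomial ℂ) + X ^ (rr + 1) := by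
      rw [add_pow]
      rw [Finset.sum_range_succ]
      simp
    rw [hlhs, add_sub_cancel_right]
    refine Finset.sum_congr rfl fun k hk => ?_
    rw [Finset.mem_range] at hk
    have hk' : k ≤ rr := by omega
    have h1 : rr - (rr - k) = k := by omega
    have h2 : rr - k + 1 = rr + 1 - k := by omega
    have h0 : rr + 1 - 1 - k = rr - k := by omega
    rw [h0]
    rw [if_pos (Nat.sub_le _ _), h1, h2, Nat.choose_symm (by omega)]
    rw [← C_pow, ← C_eq_natCast, mul_comm (C _ * X ^ k)]
    push_cast
    ring
  rw [hfact, Matrix.det_mul]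
  have hAdet : A.det = 1 := by
    rw [Matrix.det_of_lowerTriangular A (fun r s hrs => by
      simp only [hA]
      rw [if_neg (by exact_mod_cast not_le.2 hrs)])]
    refine Finset.prod_eq_one fun r _ => ?_
    simp [hA]
  have hWdet : W.det = C ((∏ c, i c) * ∏ a : Fin n, ∏ b ∈ Finset.Ioi a, (i b - i a)) := by
    have : W = (Matrix.of fun s c : Fin n => i c ^ ((s : ℕ) + 1)).map C := rfl
    rw [this, ← RingHom.mapMatrix_apply, ← RingHom.map_det]
    congr 1
    have : (Matrix.of fun s c : Fin n => i c ^ ((s : ℕ) + 1)) =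
        (Matrix.diagonal i * Matrix.vandermonde i)ᵀ := by
      ext s c
      simp [Matrix.vandermonde, Matrix.diagonal_mul, pow_succ, mul_comm]
    rw [this, Matrix.det_transpose, Matrix.det_mul, Matrix.det_diagonal,
      Matrix.det_vandermonde]
  rw [hAdet, hWdet, one_mul]
  congr 1
  congr 1
  rw [Finset.prod_filter, Fintype.prod_prod_type]
  refine Finset.prod_congr rfl fun a _ => ?_
  rw [← Finset.filter_lt_eq_Ioi, Finset.prod_filter]
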